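/- Let B be a commutative ring and let M be a free B-module. Then for every family (I_i)_{i ∈ ι} of ideals of B, one has (⋂_{i ∈ ι} I_i) • M = ⋂_{i ∈ ι} (I_i • M); that is, (⨅ i, I_i) • (⊤ : Submodule B M) = ⨅ i, (I_i • (⊤ : Submodule B M)). -/

import Mathlib

lemma mem_ideal_smul_top_iff_of_basis {B M κ : Type*} [CommRing B] [AddCommGroup M]
    [Module B M] (b : Module.Basis κ B M) (I : Ideal B) (x : M) :
    x ∈ I • (⊤ : Submodule B M) ↔ ∀ k, b.repr x k ∈ I := by
  have htop : (⊤ : Submodule B M) = Submodule.span B (Set.range b) := b.span_eq.symm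
  rw [htop, Submodule.mem_ideal_smul_span_iff_exists_sum]
  constructor
  · rintro ⟨a, ha, rfl⟩ k
    have : (Finsupp.linearCombination B b) a = a.sum fun i c => c • b i := rfl
    rw [← this, b.repr_linearCombination]
    exact ha k
  · intro h
    refine ⟨b.repr x, h, ?_⟩
    have : (Finsupp.linearCombination B b) (b.repr x) = (b.repr x).sum fun i c => c • b i := rfl
    rw [← this, b.linearCombination_repr]

/-- If `M` is a free module over a commutative ring `B`, then extension of
ideals to submodules of `M` commutes with arbitrary intersections:
`(⨅ i, I i) • ⊤ = ⨅ i, (I i • ⊤)`. -/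
theorem iInf_smul_top_of_free
    (B M : Type*) [CommRing B] [AddCommGroup M] [Module B M] [Module.Free B M]
    {ι : Type*} (I : ι → Ideal B) :
    (⨅ i, I i) • (⊤ : Submodule B M) = ⨅ i, (I i • (⊤ : Submodule B M)) := by
  obtain ⟨⟨κ, b⟩⟩ := ‹Module.Free B M›
  ext x
  simp only [Submodule.mem_iInf, mem_ideal_smul_top_iff_of_basis b, Ideal.mem_iInf]
  tauto
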